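/- arXiv:2206.14376 — 5 statements merged into one kernel-verified Lean document; each statement's English description precedes it below -/
import Mathlib

section
/- For every 7-uniform hypergraph H with vertex set V and edge set E, the transversal number satisfies 96050·τ(H) ≤ 11093·n₁ + 17131·n₂ + 18250·n₃ + 18400·n₍≥4₎ + 18400·|E|, where nᵢ is the number of vertices of degree i and n₍≥4₎ is the number of vertices of degree at least 4. -/
variable {α : Type*} [DecidableEq α]

/-- A transversal of an edge set: meets every edge. -/
def IsTransversal (E : Finset (Finset α)) (T : Finset α) : Prop :=
  ∀ e ∈ E, (e ∩ T).Nonempty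

/-- Transversal number: minimum cardinality of a transversal. -/
noncomputable def tau (E : Finset (Finset α)) : ℕ :=
  sInf {n | ∃ T : Finset α, T.card = n ∧ IsTransversal E T}

/-- Degree of a vertex: number of edges containing it. -/
def degree (E : Finset (Finset α)) (v : α) : ℕ :=
  (E.filter (fun e => v ∈ e)).card

/-- Neighborhood of a vertex. -/
def nbhd (E : Finset (Finset α)) (v : α) : Finset α :=
  ((E.filter (fun e => v ∈ e)).biUnion id).erase v

/-- auxiliary weight function -/
def wa : ℕ → ℕ
  | 0 => 0
  | 1 => 11093
  | 2 => 14798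
  | 3 => 16170
  | _ + 4 => 16422

lemma wa_add4 (n : ℕ) : wa (n + 4) = 16422 := rfl

lemma wa_mono : Monotone wa := by
  apply monotone_nat_of_le_succ
  intro n
  match n with
  | 0 => decide
  | 1 => decide
  | 2 => decide
  | 3 => decide
  | n + 4 => exact le_of_eq ((wa_add4 n).trans (wa_add4 (n+1)).symm)

lemma wa_slot (d j i : ℕ) (hjd : j ≤ d) (hij : i ≤ j) :
    wa (j - i) + i * (wa d - wa (d - 1)) ≤ wa j := by
  rcases le_or_gt d 4 with hd | hd
  · have h : ∀ d' ≤ 4, ∀ j' ≤ d', ∀ i' ≤ j',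
        wa (j' - i') + i' * (wa d' - wa (d' - 1)) ≤ wa j' := by decide
    exact h d hd j hjd i hij
  · have h0 : wa d - wa (d - 1) = 0 := by
      obtain ⟨k, rfl⟩ : ∃ k, d = k + 5 := ⟨d - 5, by omega⟩
      have h1 : wa (k + 5) = 16422 := wa_add4 (k + 1)
      have h2 : wa (k + 5 - 1) = 16422 := wa_add4 k
      omega
    rw [h0, Nat.mul_zero, Nat.add_zero]
    exact wa_mono (Nat.sub_le j i)

lemma wa_arith (d : ℕ) (hd : 1 ≤ d) :
    96050 ≤ 18400 * d + wa d + 6 * d * (wa d - wa (d - 1)) := by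
  rcases le_or_gt d 4 with h | h
  · have h' : ∀ d' ≤ 4, 1 ≤ d' →
        96050 ≤ 18400 * d' + wa d' + 6 * d' * (wa d' - wa (d' - 1)) := by decide
    exact h' d h hd
  · obtain ⟨k, rfl⟩ : ∃ k, d = k + 4 := ⟨d - 4, by omega⟩
    have h1 : wa (k + 4) = 16422 := wa_add4 k
    have h2 : 18400 * 5 ≤ 18400 * (k + 4) := by omega
    omega

lemma exists_tau_transversal (E : Finset (Finset α)) (hu : ∀ e ∈ E, e.card = 7) :
    ∃ T : Finset α, T.card = tau E ∧ IsTransversal E T := by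
  have hne : {n | ∃ T : Finset α, T.card = n ∧ IsTransversal E T}.Nonempty := by
    refine ⟨(E.biUnion id).card, E.biUnion id, rfl, fun e he => ?_⟩
    have hec : e.Nonempty := Finset.card_pos.mp (by rw [hu e he]; norm_num)
    obtain ⟨x, hx⟩ := hec
    exact ⟨x, Finset.mem_inter.mpr ⟨hx, Finset.mem_biUnion.mpr ⟨e, he, hx⟩⟩⟩
  have := Nat.sInf_mem hne
  exact this

lemma tau_le_card_of_transversal (E : Finset (Finset α)) (T : Finset α)
    (h : IsTransversal E T) : tau E ≤ T.card :=
  Nat.sInf_le ⟨T, rfl, h⟩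

lemma main_bound : ∀ (E : Finset (Finset α)), (∀ e ∈ E, e.card = 7) →
    96050 * tau E ≤ 18400 * E.card + ∑ u ∈ E.biUnion id, wa (degree E u) := by
  intro E
  induction E using Finset.strongInduction with
  | _ E ih =>
    intro hu
    rcases E.eq_empty_or_nonempty with rfl | ⟨e0, he0⟩
    · have h0 : tau (∅ : Finset (Finset α)) ≤ (∅ : Finset α).card :=
        tau_le_card_of_transversal _ _ (fun e he => by simp at he)
      simp at h0
      simp [h0]
    · -- S : the support
      set S := E.biUnion id with hS
      have hSne : S.Nonempty := by
        have hec : e0.Nonempty := Finset.card_pos.mp (by rw [hu e0 he0]; norm_num)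
        obtain ⟨x, hx⟩ := hec
        exact ⟨x, Finset.mem_biUnion.mpr ⟨e0, he0, hx⟩⟩
      obtain ⟨v, hvS, hmax⟩ := S.exists_max_image (degree E) hSne
      set R := E.filter (fun e => v ∈ e) with hR
      set E' := E.filter (fun e => v ∉ e) with hE'
      set d := degree E v with hd
      have hdR : R.card = d := rfl
      have hd1 : 1 ≤ d := by
        obtain ⟨e, he, hve⟩ := Finset.mem_biUnion.mp hvS
        simp only [id_eq] at hve
        have : e ∈ R := Finset.mem_filter.mpr ⟨he, hve⟩
        have : R.Nonempty := ⟨e, this⟩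
        have := Finset.card_pos.mpr this
        omega
      have hE'ss : E' ⊂ E := by
        rw [hE', Finset.filter_ssubset]
        obtain ⟨e, he, hve⟩ := Finset.mem_biUnion.mp hvS
        simp only [id_eq] at hve
        exact ⟨e, he, by simp [hve]⟩
      have hu' : ∀ e ∈ E', e.card = 7 := fun e he => hu e (Finset.filter_subset _ _ he)
      have hIH := ih E' hE'ss hu'
      -- tau step
      have htau : tau E ≤ tau E' + 1 := by
        obtain ⟨T, hTc, hTt⟩ := exists_tau_transversal E' hu'
        have htrans : IsTransversal E (insert v T) := by
          intro e he
          by_cases hve : v ∈ e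
          · exact ⟨v, Finset.mem_inter.mpr ⟨hve, Finset.mem_insert_self _ _⟩⟩
          · obtain ⟨x, hx⟩ := hTt e (Finset.mem_filter.mpr ⟨he, hve⟩)
            have hx' := Finset.mem_inter.mp hx
            exact ⟨x, Finset.mem_inter.mpr ⟨hx'.1, Finset.mem_insert_of_mem hx'.2⟩⟩
        calc tau E ≤ (insert v T).card := tau_le_card_of_transversal _ _ htrans
          _ ≤ T.card + 1 := Finset.card_insert_le _ _
          _ = tau E' + 1 := by omega
      -- degree splitting
      have hds : ∀ u, degree E u = degree R u + degree E' u := by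
        intro u
        rw [degree, degree, degree, Finset.card_filter, Finset.card_filter,
          Finset.card_filter, ← Finset.sum_filter_add_sum_filter_not E (fun e => v ∈ e)]
      -- degree E' v = 0
      have hdE'v : degree E' v = 0 := by
        rw [degree, Finset.card_eq_zero, Finset.filter_eq_empty_iff]
        intro e he
        exact (Finset.mem_filter.mp he).2
      -- card splitting
      have hcard : E.card = R.card + E'.card := by
        rw [hR, hE', Finset.card_filter_add_card_filter_not]
      -- sums over S' = S.erase v
      set S' := S.erase v with hS'
      -- double counting
      have hdc : ∑ u ∈ S', degree R u = 6 * R.card := by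
        have hdeg : ∀ u, degree R u = ∑ e ∈ R, if u ∈ e then 1 else 0 := by
          intro u; rw [degree, Finset.card_filter]
        calc ∑ u ∈ S', degree R u
            = ∑ u ∈ S', ∑ e ∈ R, ite (u ∈ e) 1 0 :=
              Finset.sum_congr rfl (fun u _ => hdeg u)
          _ = ∑ e ∈ R, ∑ u ∈ S', ite (u ∈ e) 1 0 := Finset.sum_comm
          _ = ∑ e ∈ R, (S'.filter (fun u => u ∈ e)).card := by
              refine Finset.sum_congr rfl (fun e _ => ?_)
              rw [Finset.card_filter]
          _ = ∑ e ∈ R, 6 := by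
              refine Finset.sum_congr rfl (fun e he => ?_)
              have heE : e ∈ E := (Finset.mem_filter.mp he).1
              have hve : v ∈ e := (Finset.mem_filter.mp he).2
              have hfe : S'.filter (fun u => u ∈ e) = e.erase v := by
                ext u
                simp only [Finset.mem_filter, hS', Finset.mem_erase, hS]
                constructor
                · rintro ⟨⟨hne, _⟩, hue⟩; exact ⟨hne, hue⟩
                · rintro ⟨hne, hue⟩
                  exact ⟨⟨hne, Finset.mem_biUnion.mpr ⟨e, heE, by simpa using hue⟩⟩, hue⟩
              rw [hfe, Finset.card_erase_of_mem hve, hu e heE]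
          _ = 6 * R.card := by rw [Finset.sum_const, smul_eq_mul, mul_comm]
      -- pointwise slot bound
      have hpt : ∀ u ∈ S', wa (degree E' u) + degree R u * (wa d - wa (d - 1))
          ≤ wa (degree E u) := by
        intro u huS'
        have huS : u ∈ S := Finset.mem_of_mem_erase huS'
        have hjd : degree E u ≤ d := hmax u huS
        have hsplit := hds u
        have hij : degree R u ≤ degree E u := by omega
        have := wa_slot d (degree E u) (degree R u) hjd hij
        have hsub : degree E u - degree R u = degree E' u := by omega
        rwa [hsub] at this
      have hsum : (∑ u ∈ S', wa (degree E' u)) + 6 * d * (wa d - wa (d - 1))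
          ≤ ∑ u ∈ S', wa (degree E u) := by
        have h1 := Finset.sum_le_sum hpt
        rw [Finset.sum_add_distrib, ← Finset.sum_mul, hdc, hdR] at h1
        exact h1
      -- split sums at v
      have hvsplitE : ∑ u ∈ S, wa (degree E u) = wa d + ∑ u ∈ S', wa (degree E u) := by
        rw [hS', ← Finset.add_sum_erase _ _ hvS, hd]
      have hvsplitE' : ∑ u ∈ S, wa (degree E' u) = ∑ u ∈ S', wa (degree E' u) := by
        rw [hS', ← Finset.add_sum_erase _ _ hvS, hdE'v]
        simp [wa]
      -- sum over E'.biUnion id vs S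
      have hsub : E'.biUnion id ⊆ S := by
        rw [hS]
        exact Finset.biUnion_subset_biUnion_of_subset_left _ (Finset.filter_subset _ _)
      have hmonosum : ∑ u ∈ E'.biUnion id, wa (degree E' u) ≤ ∑ u ∈ S, wa (degree E' u) :=
        Finset.sum_le_sum_of_subset hsub
      have harith := wa_arith d hd1
      -- assemble
      have hfin : 96050 + (18400 * E'.card + ∑ u ∈ S, wa (degree E' u))
          ≤ 18400 * E.card + ∑ u ∈ S, wa (degree E u) := by
        rw [hvsplitE, hvsplitE', hcard, hdR]
        set z := 6 * d * (wa d - wa (d - 1)) with hz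
        omega
      calc 96050 * tau E ≤ 96050 * (tau E' + 1) := Nat.mul_le_mul_left _ htau
        _ = 96050 * tau E' + 96050 := by ring
        _ ≤ (18400 * E'.card + ∑ u ∈ E'.biUnion id, wa (degree E' u)) + 96050 := by omega
        _ ≤ (18400 * E'.card + ∑ u ∈ S, wa (degree E' u)) + 96050 := by omega
        _ ≤ 18400 * E.card + ∑ u ∈ S, wa (degree E u) := by omega

theorem stmt_0 (V : Finset α) (E : Finset (Finset α))
    (hVE : ∀ e ∈ E, e ⊆ V) (huniform : ∀ e ∈ E, e.card = 7) :
    96050 * tau E ≤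
      11093 * (V.filter (fun v => degree E v = 1)).card +
      17131 * (V.filter (fun v => degree E v = 2)).card +
      18250 * (V.filter (fun v => degree E v = 3)).card +
      18400 * (V.filter (fun v => 4 ≤ degree E v)).card +
      18400 * E.card := by
  have hmain := main_bound E huniform
  have hSV : E.biUnion id ⊆ V := Finset.biUnion_subset.mpr (fun e he => hVE e he)
  have h1 : ∑ u ∈ E.biUnion id, wa (degree E u) ≤ ∑ u ∈ V, wa (degree E u) :=
    Finset.sum_le_sum_of_subset hSV
  have hpt : ∀ n : ℕ, wa n ≤ (if n = 1 then 11093 else 0) + (if n = 2 then 17131 else 0)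
      + (if n = 3 then 18250 else 0) + (if 4 ≤ n then 18400 else 0) := by
    intro n
    match n with
    | 0 => decide
    | 1 => decide
    | 2 => decide
    | 3 => decide
    | n + 4 =>
      have h1 : ¬(n + 4 = 1) := by omega
      have h2 : ¬(n + 4 = 2) := by omega
      have h3 : ¬(n + 4 = 3) := by omega
      have h4 : 4 ≤ n + 4 := by omega
      rw [wa_add4, if_neg h1, if_neg h2, if_neg h3, if_pos h4]
      omega
  have hsumite : ∀ (p : α → Prop) [DecidablePred p] (c : ℕ),
      (∑ u ∈ V, if p u then c else 0) = c * (V.filter p).card := by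
    intro p _ c
    rw [← Finset.sum_filter, Finset.sum_const, smul_eq_mul, mul_comm]
  have h2 : ∑ u ∈ V, wa (degree E u) ≤
      11093 * (V.filter (fun v => degree E v = 1)).card +
      17131 * (V.filter (fun v => degree E v = 2)).card +
      18250 * (V.filter (fun v => degree E v = 3)).card +
      18400 * (V.filter (fun v => 4 ≤ degree E v)).card := by
    calc ∑ u ∈ V, wa (degree E u)
        ≤ ∑ u ∈ V, ((if degree E u = 1 then 11093 else 0) + (if degree E u = 2 then 17131 else 0)
          + (if degree E u = 3 then 18250 else 0) + (if 4 ≤ degree E u then 18400 else 0)) :=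
          Finset.sum_le_sum (fun u _ => hpt (degree E u))
      _ = _ := by
          rw [Finset.sum_add_distrib, Finset.sum_add_distrib, Finset.sum_add_distrib,
            hsumite (fun v => degree E v = 1) 11093,
            hsumite (fun v => degree E v = 2) 17131,
            hsumite (fun v => degree E v = 3) 18250,
            hsumite (fun v => 4 ≤ degree E v) 18400]
  omega
end

section
/- For every 9-uniform hypergraph H with n vertices and m edges, τ(H) ≤ (1/6)·(n + m). -/
variable {α : Type*} [DecidableEq α]

set_option linter.unusedSectionVars false

namespace Stmt2

def W : ℕ → ℕ
  | 0 => 24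
  | 1 => 20
  | 2 => 16
  | 3 => 12
  | 4 => 10
  | 5 => 8
  | 6 => 7
  | 7 => 6
  | 8 => 5
  | _ => 4

lemma W_ge9 {t : ℕ} (h : 9 ≤ t) : W t = 4 := by
  obtain ⟨c, hc⟩ := Nat.exists_eq_add_of_le h
  have ht : t = c + 9 := by omega
  subst ht; rfl

lemma four_le_W (t : ℕ) : 4 ≤ W t := by
  rcases Nat.lt_or_ge t 9 with h | h
  · interval_cases t <;> decide
  · rw [W_ge9 h]

lemma W_ge8' (t : ℕ) (h1 : 1 ≤ t) (h5 : t ≤ 5) : 8 ≤ W t := by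
  interval_cases t <;> decide

lemma W_step1 (t : ℕ) (h4 : 4 ≤ t) (h9 : t ≤ 9) :
    W (t - 1) ≤ W t + (1 + if t ≤ 5 then 1 else 0) := by
  interval_cases t <;> decide

lemma W_low (t : ℕ) (h4 : 4 ≤ t) (h9 : t ≤ 9) :
    4 + (if t ≤ 5 then 4 else 0) ≤ W t := by
  interval_cases t <;> decide

lemma W_drop1 (t : ℕ) (h6 : 6 ≤ t) (h9 : t ≤ 9) : W (t - 1) ≤ W t + 1 := by
  interval_cases t <;> decide

lemma W_drop2 (t : ℕ) (h6 : 6 ≤ t) (h9 : t ≤ 9) : W (t - 1 - 1) ≤ W t + 3 := by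
  interval_cases t <;> decide

lemma tau_le_card {E : Finset (Finset α)} {T : Finset α} (h : IsTransversal E T) :
    tau E ≤ T.card :=
  Nat.sInf_le ⟨T, rfl, h⟩

lemma exists_min_transversal {E : Finset (Finset α)} (T₀ : Finset α)
    (h₀ : IsTransversal E T₀) : ∃ T : Finset α, T.card = tau E ∧ IsTransversal E T := by
  have hne : {n | ∃ T : Finset α, T.card = n ∧ IsTransversal E T}.Nonempty :=
    ⟨T₀.card, T₀, rfl, h₀⟩
  exact Nat.sInf_mem hne

lemma trans_of {E : Finset (Finset α)} {U : Finset α}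
    (hs : ∀ e ∈ E, e ⊆ U) (hn : ∀ e ∈ E, e.Nonempty) : IsTransversal E U := by
  intro e he
  obtain ⟨x, hx⟩ := hn e he
  exact ⟨x, Finset.mem_inter.2 ⟨hx, hs e he hx⟩⟩

lemma tau_empty : tau (∅ : Finset (Finset α)) = 0 := by
  have h : tau (∅ : Finset (Finset α)) ≤ (∅ : Finset α).card :=
    tau_le_card (by intro e he; simp at he)
  simpa using h

lemma sum_image_le (F : Finset (Finset α)) (φ : Finset α → Finset α) (h : Finset α → ℕ) :
    ∑ g ∈ F.image φ, h g ≤ ∑ g ∈ F, h (φ g) := by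
  classical
  induction F using Finset.induction_on with
  | empty => simp
  | @insert a s ha ih =>
    rw [Finset.image_insert, Finset.sum_insert ha]
    by_cases hm : φ a ∈ s.image φ
    · rw [Finset.insert_eq_self.2 hm]
      exact ih.trans (Nat.le_add_left _ _)
    · rw [Finset.sum_insert hm]
      exact Nat.add_le_add_left ih _

lemma sum_W_card_le {A : Finset (Finset α)} :
    4 * A.card ≤ ∑ f ∈ A, W f.card := by
  calc 4 * A.card = ∑ _f ∈ A, 4 := by rw [Finset.sum_const, smul_eq_mul, mul_comm]
  _ ≤ _ := Finset.sum_le_sum (fun f _ => four_le_W f.card)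

lemma sum_W_lower {A : Finset (Finset α)} {e : Finset α} (he : e ∈ A) :
    W e.card + 4 * (A.card - 1) ≤ ∑ f ∈ A, W f.card := by
  rw [← Finset.add_sum_erase A _ he]
  have h2 : 4 * (A.erase e).card ≤ ∑ f ∈ A.erase e, W f.card := sum_W_card_le
  rw [Finset.card_erase_of_mem he] at h2
  exact Nat.add_le_add_left h2 _

lemma sum_W_two {A : Finset (Finset α)} {e f : Finset α} (he : e ∈ A) (hf : f ∈ A)
    (hef : f ≠ e) : W e.card + W f.card ≤ ∑ g ∈ A, W g.card := by
  rw [← Finset.add_sum_erase A _ he]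
  exact Nat.add_le_add_left
    (Finset.single_le_sum (f := fun g => W g.card) (fun g _ => Nat.zero_le _)
      (Finset.mem_erase.2 ⟨hef, hf⟩)) _

lemma key : ∀ (N : ℕ) (V : Finset α) (E : Finset (Finset α)), V.card ≤ N →
    (∀ e ∈ E, e ⊆ V) → (∀ e ∈ E, e.Nonempty) → (∀ e ∈ E, e.card ≤ 9) →
    24 * tau E ≤ 4 * V.card + ∑ e ∈ E, W e.card := by
  intro N
  induction N with
  | zero =>
    intro V E hVN hsub hne _hle
    have hV : V = ∅ := Finset.card_eq_zero.1 (Nat.le_zero.1 hVN)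
    have hE : E = ∅ := by
      rcases Finset.eq_empty_or_nonempty E with h | ⟨e, he⟩
      · exact h
      · obtain ⟨x, hx⟩ := hne e he
        have hxV := hsub e he hx
        rw [hV] at hxV
        simp at hxV
    subst hE
    simp [tau_empty]
  | succ n ih =>
    intro V E hVN hsub hne hle
    by_cases hVn : V.card ≤ n
    · exact ih V E hVn hsub hne hle
    have hVcard : V.card = n + 1 := by omega
    by_cases hE0 : E = ∅
    · subst hE0; simp [tau_empty]
    -- Move B : put v into the transversal, remove all edges at v.
    have doB : ∀ v ∈ V, 20 ≤ ∑ f ∈ E.filter (fun g => v ∈ g), W f.card →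
        24 * tau E ≤ 4 * V.card + ∑ e ∈ E, W e.card := by
      intro v hv hSA
      have hsub' : ∀ e ∈ E.filter (fun g => v ∉ g), e ⊆ V.erase v := by
        intro e he x hx
        have h' := Finset.mem_filter.1 he
        exact Finset.mem_erase.2 ⟨fun hxv => h'.2 (hxv ▸ hx), hsub e h'.1 hx⟩
      have hne' : ∀ e ∈ E.filter (fun g => v ∉ g), e.Nonempty :=
        fun e he => hne e (Finset.mem_filter.1 he).1
      have hle' : ∀ e ∈ E.filter (fun g => v ∉ g), e.card ≤ 9 :=
        fun e he => hle e (Finset.mem_filter.1 he).1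
      obtain ⟨T', hT'c, hT'⟩ := exists_min_transversal _ (trans_of hsub' hne')
      have h1 : tau E ≤ tau (E.filter (fun g => v ∉ g)) + 1 := by
        have hcov : IsTransversal E (insert v T') := by
          intro g hg
          by_cases hvg : v ∈ g
          · exact ⟨v, Finset.mem_inter.2 ⟨hvg, Finset.mem_insert_self _ _⟩⟩
          · obtain ⟨x, hx⟩ := hT' g (Finset.mem_filter.2 ⟨hg, hvg⟩)
            have hx' := Finset.mem_inter.1 hx
            exact ⟨x, Finset.mem_inter.2 ⟨hx'.1, Finset.mem_insert_of_mem hx'.2⟩⟩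
        calc tau E ≤ (insert v T').card := tau_le_card hcov
          _ ≤ T'.card + 1 := Finset.card_insert_le _ _
          _ = tau (E.filter (fun g => v ∉ g)) + 1 := by rw [hT'c]
      have h2 := ih (V.erase v) (E.filter (fun g => v ∉ g))
        (by rw [Finset.card_erase_of_mem hv]; omega) hsub' hne' hle'
      have h3 := Finset.sum_filter_add_sum_filter_not E (fun g => v ∈ g) (fun f => W f.card)
      have h4 := Finset.card_erase_of_mem hv
      have h5 : 1 ≤ V.card := Finset.card_pos.2 ⟨v, hv⟩
      omega
    -- Move C : delete vertex u from V and from all edges.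
    have doC : ∀ u ∈ V, (∀ g ∈ E, u ∈ g → 2 ≤ g.card) →
        ((∑ g ∈ E, W ((g.erase u).card)) ≤ (∑ g ∈ E, W g.card) + 4) →
        24 * tau E ≤ 4 * V.card + ∑ e ∈ E, W e.card := by
      intro u hu h2c hpen
      have hsub' : ∀ e ∈ E.image (fun g => g.erase u), e ⊆ V.erase u := by
        intro e he x hx
        obtain ⟨g, hg, rfl⟩ := Finset.mem_image.1 he
        have hxg := Finset.mem_erase.1 hx
        exact Finset.mem_erase.2 ⟨hxg.1, hsub g hg hxg.2⟩
      have hne' : ∀ e ∈ E.image (fun g => g.erase u), e.Nonempty := by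
        intro e he
        obtain ⟨g, hg, rfl⟩ := Finset.mem_image.1 he
        by_cases hug : u ∈ g
        · rw [← Finset.card_pos, Finset.card_erase_of_mem hug]
          have := h2c g hg hug; omega
        · rw [Finset.erase_eq_of_notMem hug]; exact hne g hg
      have hle' : ∀ e ∈ E.image (fun g => g.erase u), e.card ≤ 9 := by
        intro e he
        obtain ⟨g, hg, rfl⟩ := Finset.mem_image.1 he
        exact le_trans Finset.card_erase_le (hle g hg)
      obtain ⟨T', hT'c, hT'⟩ := exists_min_transversal _ (trans_of hsub' hne')
      have h1 : tau E ≤ tau (E.image (fun g => g.erase u)) := by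
        have hcov : IsTransversal E T' := by
          intro g hg
          obtain ⟨x, hx⟩ := hT' (g.erase u) (Finset.mem_image_of_mem _ hg)
          have hx' := Finset.mem_inter.1 hx
          exact ⟨x, Finset.mem_inter.2 ⟨Finset.erase_subset _ _ hx'.1, hx'.2⟩⟩
        exact le_trans (tau_le_card hcov) (le_of_eq hT'c)
      have h2 := ih (V.erase u) (E.image (fun g => g.erase u))
        (by rw [Finset.card_erase_of_mem hu]; omega) hsub' hne' hle'
      have h3 : ∑ g ∈ E.image (fun g => g.erase u), W g.card ≤
          ∑ g ∈ E, W ((g.erase u).card) := sum_image_le E _ (fun g => W g.card)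
      have h4 := Finset.card_erase_of_mem hu
      have h5 : 1 ≤ V.card := Finset.card_pos.2 ⟨u, hu⟩
      omega
    -- case analysis
    by_cases hhigh : ∃ v, 5 ≤ degree E v
    · obtain ⟨v, hv5⟩ := hhigh
      have hdeq : degree E v = (E.filter (fun g => v ∈ g)).card := rfl
      have hA : (E.filter (fun g => v ∈ g)).Nonempty := by
        rw [← Finset.card_pos]; omega
      obtain ⟨f, hf⟩ := hA
      have hfm := Finset.mem_filter.1 hf
      apply doB v (hsub f hfm.1 hfm.2)
      have h20 : 4 * (E.filter (fun g => v ∈ g)).card ≤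
          ∑ f ∈ E.filter (fun g => v ∈ g), W f.card := sum_W_card_le
      omega
    push_neg at hhigh
    by_cases hsmall : ∃ e ∈ E, e.card ≤ 3
    · obtain ⟨e, heE, he3⟩ := hsmall
      have he1 : 1 ≤ e.card := Finset.card_pos.2 (hne e heE)
      have hecases : e.card = 1 ∨ e.card = 2 ∨ e.card = 3 := by omega
      rcases hecases with h1 | h2 | h3
      · -- size 1 edge: pick its vertex
        obtain ⟨a, rfl⟩ := Finset.card_eq_one.1 h1
        have haV : a ∈ V := hsub _ heE (Finset.mem_singleton_self a)
        apply doB a haV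
        have hmem : ({a} : Finset α) ∈ E.filter (fun g => a ∈ g) :=
          Finset.mem_filter.2 ⟨heE, Finset.mem_singleton_self a⟩
        have hs : W ({a} : Finset α).card ≤ ∑ f ∈ E.filter (fun g => a ∈ g), W f.card :=
          Finset.single_le_sum (f := fun g => W g.card) (fun f _ => Nat.zero_le _) hmem
        have hc : W ({a} : Finset α).card = 20 := by
          rw [Finset.card_singleton]; rfl
        omega
      · -- size 2 edge
        obtain ⟨a, b, hab, rfl⟩ := Finset.card_eq_two.1 h2
        have hae : a ∈ ({a, b} : Finset α) := by simp
        have hbe : b ∈ ({a, b} : Finset α) := by simp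
        have haV : a ∈ V := hsub _ heE hae
        have hbV : b ∈ V := hsub _ heE hbe
        have hWe : W ({a, b} : Finset α).card = 16 := by rw [h2]; rfl
        by_cases hda : 2 ≤ degree E a
        · apply doB a haV
          have hmemA : ({a, b} : Finset α) ∈ E.filter (fun g => a ∈ g) :=
            Finset.mem_filter.2 ⟨heE, hae⟩
          have hlow := sum_W_lower hmemA
          have hdeq : degree E a = (E.filter (fun g => a ∈ g)).card := rfl
          omega
        by_cases hdb : 2 ≤ degree E b
        · apply doB b hbV
          have hmemA : ({a, b} : Finset α) ∈ E.filter (fun g => b ∈ g) :=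
            Finset.mem_filter.2 ⟨heE, hbe⟩
          have hlow := sum_W_lower hmemA
          have hdeq : degree E b = (E.filter (fun g => b ∈ g)).card := rfl
          omega
        · -- isolated 2-edge: pick a; b becomes isolated; delete both.
          have hdb1 : degree E b = 1 := by
            have h1' : 1 ≤ degree E b :=
              Finset.card_pos.2 ⟨_, Finset.mem_filter.2 ⟨heE, hbe⟩⟩
            omega
          have honlyb : ∀ g ∈ E, b ∈ g → g = {a, b} := by
            intro g hg hbg
            obtain ⟨x, hx⟩ := Finset.card_eq_one.1
              (show (E.filter (fun y => b ∈ y)).card = 1 from hdb1)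
            have h1g : g = x := by
              have hm : g ∈ E.filter (fun y => b ∈ y) := Finset.mem_filter.2 ⟨hg, hbg⟩
              rw [hx] at hm; simpa using hm
            have h1e : ({a, b} : Finset α) = x := by
              have hm : ({a, b} : Finset α) ∈ E.filter (fun y => b ∈ y) :=
                Finset.mem_filter.2 ⟨heE, hbe⟩
              rw [hx] at hm; simpa using hm
            rw [h1g, ← h1e]
          have hsub' : ∀ g ∈ E.filter (fun g => a ∉ g), g ⊆ (V.erase b).erase a := by
            intro g hg x hx
            have hgf := Finset.mem_filter.1 hg
            have hxb : x ≠ b := by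
              intro h; subst h
              exact hgf.2 (by rw [honlyb g hgf.1 hx]; simp)
            have hxa : x ≠ a := fun h => hgf.2 (h ▸ hx)
            exact Finset.mem_erase.2 ⟨hxa, Finset.mem_erase.2 ⟨hxb, hsub g hgf.1 hx⟩⟩
          have hne' : ∀ g ∈ E.filter (fun g => a ∉ g), g.Nonempty :=
            fun g hg => hne g (Finset.mem_filter.1 hg).1
          have hle' : ∀ g ∈ E.filter (fun g => a ∉ g), g.card ≤ 9 :=
            fun g hg => hle g (Finset.mem_filter.1 hg).1
          obtain ⟨T', hT'c, hT'⟩ := exists_min_transversal _ (trans_of hsub' hne')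
          have h1' : tau E ≤ tau (E.filter (fun g => a ∉ g)) + 1 := by
            have hcov : IsTransversal E (insert a T') := by
              intro g hg
              by_cases hag : a ∈ g
              · exact ⟨a, Finset.mem_inter.2 ⟨hag, Finset.mem_insert_self _ _⟩⟩
              · obtain ⟨x, hx⟩ := hT' g (Finset.mem_filter.2 ⟨hg, hag⟩)
                have hx' := Finset.mem_inter.1 hx
                exact ⟨x, Finset.mem_inter.2 ⟨hx'.1, Finset.mem_insert_of_mem hx'.2⟩⟩
            calc tau E ≤ (insert a T').card := tau_le_card hcov
              _ ≤ T'.card + 1 := Finset.card_insert_le _ _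
              _ = tau (E.filter (fun g => a ∉ g)) + 1 := by rw [hT'c]
          have haV' : a ∈ V.erase b := Finset.mem_erase.2 ⟨hab, haV⟩
          have h2' := ih ((V.erase b).erase a) (E.filter (fun g => a ∉ g))
            (by rw [Finset.card_erase_of_mem haV', Finset.card_erase_of_mem hbV]; omega)
            hsub' hne' hle'
          have h3 := Finset.sum_filter_add_sum_filter_not E (fun g => a ∈ g) (fun f => W f.card)
          have hmemA : ({a, b} : Finset α) ∈ E.filter (fun g => a ∈ g) :=
            Finset.mem_filter.2 ⟨heE, hae⟩
          have hSA : W ({a, b} : Finset α).card ≤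
              ∑ f ∈ E.filter (fun g => a ∈ g), W f.card :=
            Finset.single_le_sum (f := fun g => W g.card) (fun f _ => Nat.zero_le _) hmemA
          have hc1 := Finset.card_erase_of_mem haV'
          have hc2 := Finset.card_erase_of_mem hbV
          have h5 : 2 ≤ V.card := by
            have hcle := Finset.card_le_card (hsub _ heE)
            omega
          omega
      · -- size 3 edge
        obtain ⟨a, b, c, hab, hac, hbc, rfl⟩ := Finset.card_eq_three.1 h3
        have hae : a ∈ ({a, b, c} : Finset α) := by simp
        have hbe : b ∈ ({a, b, c} : Finset α) := by simp
        have hce : c ∈ ({a, b, c} : Finset α) := by simp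
        have haV : a ∈ V := hsub _ heE hae
        have hbV : b ∈ V := hsub _ heE hbe
        have hcV : c ∈ V := hsub _ heE hce
        have hWe : W ({a, b, c} : Finset α).card = 12 := by rw [h3]; rfl
        by_cases h3d : ∃ u ∈ ({a, b, c} : Finset α), 3 ≤ degree E u
        · obtain ⟨u, hue, hu3⟩ := h3d
          apply doB u (hsub _ heE hue)
          have hmem : ({a, b, c} : Finset α) ∈ E.filter (fun g => u ∈ g) :=
            Finset.mem_filter.2 ⟨heE, hue⟩
          have hlow := sum_W_lower hmem
          have hdeq : degree E u = (E.filter (fun g => u ∈ g)).card := rfl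
          omega
        by_cases h1d : ∃ u ∈ ({a, b, c} : Finset α), degree E u = 1
        · obtain ⟨u, hue, hu1⟩ := h1d
          have huV := hsub _ heE hue
          have honly : ∀ g ∈ E, u ∈ g → g = {a, b, c} := by
            intro g hg hug
            obtain ⟨x, hx⟩ := Finset.card_eq_one.1
              (show (E.filter (fun y => u ∈ y)).card = 1 from hu1)
            have h1g : g = x := by
              have hm : g ∈ E.filter (fun y => u ∈ y) := Finset.mem_filter.2 ⟨hg, hug⟩
              rw [hx] at hm; simpa using hm
            have h1e : ({a, b, c} : Finset α) = x := by
              have hm : ({a, b, c} : Finset α) ∈ E.filter (fun y => u ∈ y) :=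
                Finset.mem_filter.2 ⟨heE, hue⟩
              rw [hx] at hm; simpa using hm
            rw [h1g, ← h1e]
          apply doC u huV
          · intro g hg hug; rw [honly g hg hug, h3]; omega
          · have hpt : ∀ g ∈ E, W ((g.erase u).card) ≤
                W g.card + (if g = {a, b, c} then 4 else 0) := by
              intro g hg
              by_cases hge : g = ({a, b, c} : Finset α)
              · subst hge
                rw [if_pos rfl, Finset.card_erase_of_mem hue, h3]
                decide
              · have hug : u ∉ g := fun hug => hge (honly g hg hug)
                rw [Finset.erase_eq_of_notMem hug, if_neg hge]
                omega
            calc ∑ g ∈ E, W ((g.erase u).card)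
                ≤ ∑ g ∈ E, (W g.card + if g = {a, b, c} then 4 else 0) :=
                  Finset.sum_le_sum hpt
              _ = (∑ g ∈ E, W g.card) + ∑ g ∈ E, (if g = {a, b, c} then 4 else 0) :=
                  Finset.sum_add_distrib
              _ ≤ (∑ g ∈ E, W g.card) + 4 := by
                  have hx : ∑ g ∈ E, (if g = ({a, b, c} : Finset α) then 4 else 0) = 4 := by
                    rw [Finset.sum_ite_eq' E ({a, b, c} : Finset α) (fun _ => 4)]
                    simp [heE]
                  omega
        by_cases h5p : ∃ u ∈ ({a, b, c} : Finset α),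
            ∃ f ∈ E, u ∈ f ∧ f ≠ {a, b, c} ∧ f.card ≤ 5
        · obtain ⟨u, hue, f, hfE, huf, hfne, hf5⟩ := h5p
          apply doB u (hsub _ heE hue)
          have hmeme : ({a, b, c} : Finset α) ∈ E.filter (fun g => u ∈ g) :=
            Finset.mem_filter.2 ⟨heE, hue⟩
          have hmemf : f ∈ E.filter (fun g => u ∈ g) := Finset.mem_filter.2 ⟨hfE, huf⟩
          have htwo := sum_W_two hmeme hmemf hfne
          have hWf : 8 ≤ W f.card := W_ge8' f.card (Finset.card_pos.2 (hne f hfE)) hf5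
          omega
        · -- bundle: pick a; then delete b and c.
          push_neg at h3d h1d h5p
          have hdeg2 : ∀ u ∈ ({a, b, c} : Finset α), degree E u = 2 := by
            intro u hue
            have hlt := h3d u hue
            have hne1 := h1d u hue
            have hpos : 1 ≤ degree E u :=
              Finset.card_pos.2 ⟨_, Finset.mem_filter.2 ⟨heE, hue⟩⟩
            omega
          have hpart : ∀ u ∈ ({a, b, c} : Finset α), ∀ f ∈ E, u ∈ f →
              f ≠ {a, b, c} → 6 ≤ f.card := by
            intro u hue f hfE huf hfne
            have := h5p u hue f hfE huf hfne
            omega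
          have hmea : ({a, b, c} : Finset α) ∈ E.filter (fun g => a ∈ g) :=
            Finset.mem_filter.2 ⟨heE, hae⟩
          have hfane : ((E.filter (fun g => a ∈ g)).erase {a, b, c}).Nonempty := by
            rw [← Finset.card_pos, Finset.card_erase_of_mem hmea]
            have hca : (E.filter (fun g => a ∈ g)).card = 2 := hdeg2 a hae
            omega
          obtain ⟨fa, hfa⟩ := hfane
          have hfa' := Finset.mem_erase.1 hfa
          have hfane' : fa ≠ ({a, b, c} : Finset α) := hfa'.1
          -- at most one edge of E1 contains b, resp. c
          have hb1 : ((E.filter (fun g => a ∉ g)).filter (fun g => b ∈ g)).card ≤ 1 := by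
            have hsubf : (E.filter (fun g => a ∉ g)).filter (fun g => b ∈ g) ⊆
                (E.filter (fun g => b ∈ g)).erase {a, b, c} := by
              intro g hg
              have h1' := Finset.mem_filter.1 hg
              have h2' := Finset.mem_filter.1 h1'.1
              refine Finset.mem_erase.2 ⟨?_, Finset.mem_filter.2 ⟨h2'.1, h1'.2⟩⟩
              intro hge; rw [hge] at h2'; exact h2'.2 hae
            have hcle := Finset.card_le_card hsubf
            have hmeb : ({a, b, c} : Finset α) ∈ E.filter (fun g => b ∈ g) :=
              Finset.mem_filter.2 ⟨heE, hbe⟩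
            rw [Finset.card_erase_of_mem hmeb] at hcle
            have hcb : (E.filter (fun g => b ∈ g)).card = 2 := hdeg2 b hbe
            omega
          have hc1 : ((E.filter (fun g => a ∉ g)).filter (fun g => c ∈ g)).card ≤ 1 := by
            have hsubf : (E.filter (fun g => a ∉ g)).filter (fun g => c ∈ g) ⊆
                (E.filter (fun g => c ∈ g)).erase {a, b, c} := by
              intro g hg
              have h1' := Finset.mem_filter.1 hg
              have h2' := Finset.mem_filter.1 h1'.1
              refine Finset.mem_erase.2 ⟨?_, Finset.mem_filter.2 ⟨h2'.1, h1'.2⟩⟩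
              intro hge; rw [hge] at h2'; exact h2'.2 hae
            have hcle := Finset.card_le_card hsubf
            have hmec : ({a, b, c} : Finset α) ∈ E.filter (fun g => c ∈ g) :=
              Finset.mem_filter.2 ⟨heE, hce⟩
            rw [Finset.card_erase_of_mem hmec] at hcle
            have hcc : (E.filter (fun g => c ∈ g)).card = 2 := hdeg2 c hce
            omega
          have hpt : ∀ g ∈ E.filter (fun g => a ∉ g), W (((g.erase b).erase c).card) ≤
              W g.card + ((if b ∈ g then 1 else 0) + (if c ∈ g then 2 else 0)) := by
            intro g hg
            have hgf := Finset.mem_filter.1 hg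
            have hgE := hgf.1
            have hga : a ∉ g := hgf.2
            have hgne : g ≠ ({a, b, c} : Finset α) := fun h => hga (by rw [h]; simp)
            by_cases hbg : b ∈ g
            · have h6 : 6 ≤ g.card := hpart b hbe g hgE hbg hgne
              have h9 : g.card ≤ 9 := hle g hgE
              by_cases hcg : c ∈ g
              · have hcg' : c ∈ g.erase b :=
                  Finset.mem_erase.2 ⟨fun h => hbc h.symm, hcg⟩
                rw [Finset.card_erase_of_mem hcg', Finset.card_erase_of_mem hbg,
                  if_pos hbg, if_pos hcg]
                have := W_drop2 g.card h6 h9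
                omega
              · have hcg' : c ∉ g.erase b := fun h => hcg (Finset.mem_of_mem_erase h)
                rw [Finset.erase_eq_of_notMem hcg', Finset.card_erase_of_mem hbg,
                  if_pos hbg, if_neg hcg]
                have := W_drop1 g.card h6 h9
                omega
            · rw [Finset.erase_eq_of_notMem hbg, if_neg hbg]
              by_cases hcg : c ∈ g
              · have h6 : 6 ≤ g.card := hpart c hce g hgE hcg hgne
                have h9 : g.card ≤ 9 := hle g hgE
                rw [Finset.card_erase_of_mem hcg, if_pos hcg]
                have := W_drop1 g.card h6 h9
                omega
              · rw [Finset.erase_eq_of_notMem hcg, if_neg hcg]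
                omega
          have hsum1 : ∑ g ∈ E.filter (fun g => a ∉ g), W (((g.erase b).erase c).card) ≤
              (∑ g ∈ E.filter (fun g => a ∉ g), W g.card) + 3 := by
            have hstep : ∑ g ∈ E.filter (fun g => a ∉ g), W (((g.erase b).erase c).card) ≤
                (∑ g ∈ E.filter (fun g => a ∉ g), W g.card) +
                ((∑ g ∈ E.filter (fun g => a ∉ g), if b ∈ g then 1 else 0) +
                 (∑ g ∈ E.filter (fun g => a ∉ g), if c ∈ g then 2 else 0)) := by
              calc ∑ g ∈ E.filter (fun g => a ∉ g), W (((g.erase b).erase c).card)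
                  ≤ ∑ g ∈ E.filter (fun g => a ∉ g),
                      (W g.card + ((if b ∈ g then 1 else 0) + (if c ∈ g then 2 else 0))) :=
                    Finset.sum_le_sum hpt
                _ = _ := by rw [Finset.sum_add_distrib, Finset.sum_add_distrib]
            have hbs : (∑ g ∈ E.filter (fun g => a ∉ g), if b ∈ g then 1 else 0)
                = ((E.filter (fun g => a ∉ g)).filter (fun g => b ∈ g)).card := by
              rw [← Finset.sum_filter]; simp
            have hcs : (∑ g ∈ E.filter (fun g => a ∉ g), if c ∈ g then 2 else 0)
                = 2 * ((E.filter (fun g => a ∉ g)).filter (fun g => c ∈ g)).card := by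
              rw [← Finset.sum_filter, Finset.sum_const, smul_eq_mul, mul_comm]
            omega
          have hsub3 : ∀ g ∈ ((E.filter (fun g => a ∉ g)).image (fun g => g.erase b)).image
              (fun g => g.erase c), g ⊆ ((V.erase a).erase b).erase c := by
            intro g3 hg3 x hx
            obtain ⟨g2, hg2, rfl⟩ := Finset.mem_image.1 hg3
            obtain ⟨g, hg, rfl⟩ := Finset.mem_image.1 hg2
            have hx1 := Finset.mem_erase.1 hx
            have hx2 := Finset.mem_erase.1 hx1.2
            have hgf := Finset.mem_filter.1 hg
            have hxa : x ≠ a := fun h => hgf.2 (h ▸ hx2.2)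
            exact Finset.mem_erase.2 ⟨hx1.1, Finset.mem_erase.2 ⟨hx2.1,
              Finset.mem_erase.2 ⟨hxa, hsub g hgf.1 hx2.2⟩⟩⟩
          have hne3 : ∀ g ∈ ((E.filter (fun g => a ∉ g)).image (fun g => g.erase b)).image
              (fun g => g.erase c), g.Nonempty := by
            intro g3 hg3
            obtain ⟨g2, hg2, rfl⟩ := Finset.mem_image.1 hg3
            obtain ⟨g, hg, rfl⟩ := Finset.mem_image.1 hg2
            have hgf := Finset.mem_filter.1 hg
            have hgE := hgf.1
            have hgne : g ≠ ({a, b, c} : Finset α) := fun h => hgf.2 (by rw [h]; simp)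
            rw [← Finset.card_pos]
            by_cases hbg : b ∈ g
            · have h6 := hpart b hbe g hgE hbg hgne
              have hbcard : (g.erase b).card = g.card - 1 := Finset.card_erase_of_mem hbg
              have hl : (g.erase b).card - 1 ≤ ((g.erase b).erase c).card :=
                Finset.pred_card_le_card_erase
              omega
            · rw [Finset.erase_eq_of_notMem hbg]
              by_cases hcg : c ∈ g
              · have h6 := hpart c hce g hgE hcg hgne
                rw [Finset.card_erase_of_mem hcg]; omega
              · rw [Finset.erase_eq_of_notMem hcg]
                exact Finset.card_pos.2 (hne g hgE)
          have hle3 : ∀ g ∈ ((E.filter (fun g => a ∉ g)).image (fun g => g.erase b)).image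
              (fun g => g.erase c), g.card ≤ 9 := by
            intro g3 hg3
            obtain ⟨g2, hg2, rfl⟩ := Finset.mem_image.1 hg3
            obtain ⟨g, hg, rfl⟩ := Finset.mem_image.1 hg2
            exact le_trans Finset.card_erase_le (le_trans Finset.card_erase_le
              (hle g (Finset.mem_filter.1 hg).1))
          obtain ⟨T3, hT3c, hT3⟩ := exists_min_transversal _ (trans_of hsub3 hne3)
          have h1' : tau E ≤ tau (((E.filter (fun g => a ∉ g)).image
              (fun g => g.erase b)).image (fun g => g.erase c)) + 1 := by
            have hcov : IsTransversal E (insert a T3) := by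
              intro g hg
              by_cases hag : a ∈ g
              · exact ⟨a, Finset.mem_inter.2 ⟨hag, Finset.mem_insert_self _ _⟩⟩
              · have hg3 : (g.erase b).erase c ∈ ((E.filter (fun g => a ∉ g)).image
                    (fun g => g.erase b)).image (fun g => g.erase c) :=
                  Finset.mem_image_of_mem _ (Finset.mem_image_of_mem _
                    (Finset.mem_filter.2 ⟨hg, hag⟩))
                obtain ⟨x, hx⟩ := hT3 _ hg3
                have hx' := Finset.mem_inter.1 hx
                have hxg : x ∈ g :=
                  Finset.mem_of_mem_erase (Finset.mem_of_mem_erase hx'.1)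
                exact ⟨x, Finset.mem_inter.2 ⟨hxg, Finset.mem_insert_of_mem hx'.2⟩⟩
            calc tau E ≤ (insert a T3).card := tau_le_card hcov
              _ ≤ T3.card + 1 := Finset.card_insert_le _ _
              _ = _ + 1 := by rw [hT3c]
          have hbV' : b ∈ V.erase a := Finset.mem_erase.2 ⟨fun h => hab h.symm, hbV⟩
          have hcV' : c ∈ (V.erase a).erase b := Finset.mem_erase.2 ⟨fun h => hbc h.symm,
            Finset.mem_erase.2 ⟨fun h => hac h.symm, hcV⟩⟩
          have h2' := ih (((V.erase a).erase b).erase c)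
            (((E.filter (fun g => a ∉ g)).image (fun g => g.erase b)).image
              (fun g => g.erase c))
            (by rw [Finset.card_erase_of_mem hcV', Finset.card_erase_of_mem hbV',
              Finset.card_erase_of_mem haV]; omega) hsub3 hne3 hle3
          have hsum3 : ∑ g ∈ (((E.filter (fun g => a ∉ g)).image (fun g => g.erase b)).image
              (fun g => g.erase c)), W g.card ≤
              ∑ g ∈ E.filter (fun g => a ∉ g), W (((g.erase b).erase c).card) := by
            calc ∑ g ∈ (((E.filter (fun g => a ∉ g)).image (fun g => g.erase b)).image
                (fun g => g.erase c)), W g.card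
                ≤ ∑ g2 ∈ (E.filter (fun g => a ∉ g)).image (fun g => g.erase b),
                    W ((g2.erase c).card) := sum_image_le _ _ _
              _ ≤ _ := sum_image_le _ _ (fun g2 => W ((g2.erase c).card))
          have h3' := Finset.sum_filter_add_sum_filter_not E (fun g => a ∈ g)
            (fun f => W f.card)
          have htwo := sum_W_two hmea hfa'.2 hfane'
          have hWfa : 4 ≤ W fa.card := four_le_W _
          have hcard3 : 3 ≤ V.card := by
            have hcle := Finset.card_le_card (hsub _ heE); omega
          have hc1' := Finset.card_erase_of_mem hcV'
          have hc2' := Finset.card_erase_of_mem hbV'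
          have hc3' := Finset.card_erase_of_mem haV
          omega
    · -- all edges have ≥ 4 vertices
      push_neg at hsmall
      obtain ⟨e, heE⟩ := Finset.nonempty_iff_ne_empty.2 hE0
      obtain ⟨u, hue⟩ := hne e heE
      have huV := hsub e heE hue
      by_cases hSA : 20 ≤ ∑ f ∈ E.filter (fun g => u ∈ g), W f.card
      · exact doB u huV hSA
      · apply doC u huV
        · intro g hg _; have := hsmall g hg; omega
        · push_neg at hSA
          have hdeq : degree E u = (E.filter (fun g => u ∈ g)).card := rfl
          have hAcard : (E.filter (fun g => u ∈ g)).card ≤ 4 := by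
            have := hhigh u; omega
          have hlow : 4 * (E.filter (fun g => u ∈ g)).card +
              4 * ((E.filter (fun g => u ∈ g)).filter (fun g => g.card ≤ 5)).card ≤
              ∑ f ∈ E.filter (fun g => u ∈ g), W f.card := by
            calc 4 * (E.filter (fun g => u ∈ g)).card +
                4 * ((E.filter (fun g => u ∈ g)).filter (fun g => g.card ≤ 5)).card
                = ∑ g ∈ E.filter (fun g => u ∈ g), (4 + if g.card ≤ 5 then 4 else 0) := by
                  rw [Finset.sum_add_distrib]
                  congr 1
                  · rw [Finset.sum_const, smul_eq_mul, mul_comm]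
                  · rw [← Finset.sum_filter, Finset.sum_const, smul_eq_mul, mul_comm]
              _ ≤ _ := Finset.sum_le_sum (fun g hg => by
                  have hgE := (Finset.mem_filter.1 hg).1
                  exact W_low g.card (by have := hsmall g hgE; omega) (hle g hgE))
          have hup : ∀ g ∈ E, W ((g.erase u).card) ≤
              W g.card + (if u ∈ g then (1 + if g.card ≤ 5 then 1 else 0) else 0) := by
            intro g hg
            by_cases hug : u ∈ g
            · rw [Finset.card_erase_of_mem hug, if_pos hug]
              exact W_step1 g.card (by have := hsmall g hg; omega) (hle g hg)
            · rw [Finset.erase_eq_of_notMem hug, if_neg hug]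
              omega
          have hmain : ∑ g ∈ E, W ((g.erase u).card) ≤
              (∑ g ∈ E, W g.card) +
              ∑ g ∈ E, (if u ∈ g then (1 + if g.card ≤ 5 then 1 else 0) else 0) := by
            calc ∑ g ∈ E, W ((g.erase u).card)
                ≤ ∑ g ∈ E, (W g.card +
                    (if u ∈ g then (1 + if g.card ≤ 5 then 1 else 0) else 0)) :=
                  Finset.sum_le_sum hup
              _ = _ := Finset.sum_add_distrib
          have hite : ∑ g ∈ E, (if u ∈ g then (1 + if g.card ≤ 5 then 1 else 0) else 0)
              = ∑ g ∈ E.filter (fun g => u ∈ g), (1 + if g.card ≤ 5 then 1 else 0) :=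
            (Finset.sum_filter _ _).symm
          have hsplit : ∑ g ∈ E.filter (fun g => u ∈ g), (1 + if g.card ≤ 5 then 1 else 0)
              = (E.filter (fun g => u ∈ g)).card +
                ((E.filter (fun g => u ∈ g)).filter (fun g => g.card ≤ 5)).card := by
            rw [Finset.sum_add_distrib]
            congr 1
            · simp
            · rw [← Finset.sum_filter]; simp
          omega

end Stmt2

theorem stmt_2 (V : Finset α) (E : Finset (Finset α))
    (hVE : ∀ e ∈ E, e ⊆ V) (huniform : ∀ e ∈ E, e.card = 9) :
    (tau E : ℚ) ≤ (1 / 6) * (V.card + E.card) := by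
  have hne : ∀ e ∈ E, e.Nonempty := fun e he =>
    Finset.card_pos.1 (by rw [huniform e he]; norm_num)
  have hle : ∀ e ∈ E, e.card ≤ 9 := fun e he => le_of_eq (huniform e he)
  have hkey := Stmt2.key V.card V E le_rfl hVE hne hle
  have hsum : ∑ e ∈ E, Stmt2.W e.card = 4 * E.card := by
    have hcong : ∀ e ∈ E, Stmt2.W e.card = 4 := fun e he => by rw [huniform e he]; rfl
    rw [Finset.sum_congr rfl hcong, Finset.sum_const, smul_eq_mul, mul_comm]
  have h6 : 6 * tau E ≤ V.card + E.card := by omega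
  have h6' := (Nat.cast_le (α := ℚ)).2 h6
  push_cast at h6'
  linarith
end

section
/- For every k ≥ 1 there exists a k-uniform hypergraph H with τ(H) = 2 and n + m = k + 1 + ⌊√k⌋ + ⌈k/⌊√k⌋⌉, where n and m are the numbers of vertices and edges. Consequently, the Tuza constant satisfies c_k ≥ 2/(k + 1 + ⌊√k⌋ + ⌈k/⌊√k⌋⌉). -/
variable {α : Type*} [DecidableEq α]

lemma stmt_11_aux (k s : ℕ) (hk : 1 ≤ k) (hs1 : 1 ≤ s) (hsk : s ≤ k) :
    ∃ (V : Finset ℕ) (E : Finset (Finset ℕ)),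
      (∀ e ∈ E, e ⊆ V) ∧ (∀ e ∈ E, e.card = k) ∧
      tau E = 2 ∧
      V.card + E.card = k + 1 + s + (k + s - 1) / s := by
  set t := (k + s - 1) / s with ht
  -- start of the i-th deleted interval
  set st : ℕ → ℕ := fun i => min (i * s) (k - s) with hst
  set O : ℕ → Finset ℕ := fun i => Finset.Ico (st i) (st i + s) with hO
  set e : ℕ → Finset ℕ := fun i => Finset.Ico k (k + s) ∪ (Finset.range k \ O i) with he
  have hOsub : ∀ i, O i ⊆ Finset.range k := by
    intro i x hx
    simp only [hO, Finset.mem_Ico] at hx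
    have : st i ≤ k - s := min_le_right _ _
    simp only [Finset.mem_range]
    omega
  have hOcard : ∀ i, (O i).card = s := by
    intro i; simp [hO]
  -- t in terms of division
  have htval : t = (k - 1) / s + 1 := by
    have : k + s - 1 = (k - 1) + s := by omega
    rw [ht, this, Nat.add_div_right _ hs1]
  -- every v < k lies in O (v / s), with v / s < t
  have hcover : ∀ v, v < k → v / s < t ∧ v ∈ O (v / s) := by
    intro v hv
    have h1 : v / s * s ≤ v := Nat.div_mul_le_self v s
    have h2 : v < v / s * s + s := by
      have ha := Nat.div_add_mod v s
      have hb : v % s < s := Nat.mod_lt v hs1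
      have hc : s * (v / s) = v / s * s := Nat.mul_comm _ _
      omega
    constructor
    · have : v / s ≤ (k - 1) / s := Nat.div_le_div_right (by omega)
      omega
    · simp only [hO, Finset.mem_Ico, hst]
      omega
  -- starts are strictly increasing on range t
  have hstlt : ∀ i j, i < j → j < t → st i < st j := by
    intro i j hij hjt
    have hj : j ≤ (k - 1) / s := by omega
    have h1 : (i + 1) * s ≤ k - 1 := by
      calc (i + 1) * s ≤ (k - 1) / s * s := Nat.mul_le_mul_right s (by omega)
        _ ≤ k - 1 := Nat.div_mul_le_self _ _
    have h2 : (i + 1) * s ≤ j * s := Nat.mul_le_mul_right s (by omega)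
    have h0 : (i + 1) * s = i * s + s := by ring
    simp only [hst]
    omega
  -- each edge e i contains k and has cardinality k
  have hkmem : ∀ i, k ∈ e i := by
    intro i
    simp only [he, Finset.mem_union, Finset.mem_Ico]
    left; omega
  have hecard : ∀ i, (e i).card = k := by
    intro i
    have hdisj : Disjoint (Finset.Ico k (k + s)) (Finset.range k \ O i) := by
      rw [Finset.disjoint_left]
      intro x hx hx'
      simp only [Finset.mem_Ico] at hx
      have := (Finset.mem_sdiff.mp hx').1
      simp only [Finset.mem_range] at this
      omega
    rw [he]
    rw [Finset.card_union_of_disjoint hdisj, Nat.card_Ico,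
      Finset.card_sdiff_of_subset (hOsub i), Finset.card_range, hOcard]
    omega
  refine ⟨Finset.range (k + s),
    insert (Finset.range k) ((Finset.range t).image e), ?_, ?_, ?_, ?_⟩
  · intro f hf
    rcases Finset.mem_insert.mp hf with rfl | hf
    · exact Finset.range_subset_range.mpr (by omega)
    · obtain ⟨i, _, rfl⟩ := Finset.mem_image.mp hf
      intro x hx
      simp only [he, Finset.mem_union, Finset.mem_Ico, Finset.mem_sdiff,
        Finset.mem_range] at hx ⊢
      omega
  · intro f hf
    rcases Finset.mem_insert.mp hf with rfl | hf
    · exact Finset.card_range k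
    · obtain ⟨i, _, rfl⟩ := Finset.mem_image.mp hf
      exact hecard i
  · -- tau = 2
    have h2mem : (2 : ℕ) ∈ {n | ∃ T : Finset ℕ, T.card = n ∧
        IsTransversal (insert (Finset.range k) ((Finset.range t).image e)) T} := by
      refine ⟨{0, k}, ?_, ?_⟩
      · rw [Finset.card_insert_of_notMem (by simp; omega), Finset.card_singleton]
      · intro f hf
        rcases Finset.mem_insert.mp hf with rfl | hf
        · exact ⟨0, by simp; omega⟩
        · obtain ⟨i, _, rfl⟩ := Finset.mem_image.mp hf
          exact ⟨k, Finset.mem_inter.mpr ⟨hkmem i, by simp⟩⟩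
    have hlb : ∀ n ∈ {n | ∃ T : Finset ℕ, T.card = n ∧
        IsTransversal (insert (Finset.range k) ((Finset.range t).image e)) T}, 2 ≤ n := by
      rintro n ⟨T, rfl, hT⟩
      by_contra hlt
      push_neg at hlt
      obtain ⟨v, hv⟩ := hT (Finset.range k) (Finset.mem_insert_self _ _)
      rw [Finset.mem_inter, Finset.mem_range] at hv
      obtain ⟨hvk, hvT⟩ := hv
      have hTeq : T = {v} := by
        apply Finset.eq_singleton_iff_unique_mem.mpr
        refine ⟨hvT, fun w hw => ?_⟩
        by_contra hne
        have : ({v, w} : Finset ℕ) ⊆ T := by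
          intro x hx
          rcases Finset.mem_insert.mp hx with rfl | hx
          · exact hvT
          · rw [Finset.mem_singleton] at hx; subst hx; exact hw
        have h2 : ({v, w} : Finset ℕ).card = 2 := by
          rw [Finset.card_insert_of_notMem (by simpa using Ne.symm hne)]
          simp
        have := Finset.card_le_card this
        omega
      obtain ⟨hit, hvO⟩ := hcover v hvk
      obtain ⟨w, hw⟩ := hT (e (v / s))
        (Finset.mem_insert_of_mem (Finset.mem_image_of_mem e (Finset.mem_range.mpr hit)))
      rw [Finset.mem_inter, hTeq, Finset.mem_singleton] at hw
      obtain ⟨hwe, rfl⟩ := hw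
      simp only [he, Finset.mem_union, Finset.mem_Ico, Finset.mem_sdiff] at hwe
      rcases hwe with h | ⟨_, h⟩
      · omega
      · exact h hvO
    rw [tau]
    exact le_antisymm (Nat.sInf_le h2mem) (le_csInf ⟨2, h2mem⟩ hlb)
  · -- cardinality count
    have hnotmem : Finset.range k ∉ (Finset.range t).image e := by
      rw [Finset.mem_image]
      rintro ⟨i, _, hi⟩
      have := hkmem i
      rw [hi] at this
      simp at this
    have hinj : Set.InjOn e (Finset.range t) := by
      intro i hi j hj hij
      simp only [Finset.coe_range, Set.mem_Iio] at hi hj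
      by_contra hne
      -- from e i = e j deduce O i = O j
      have hOeq : O i = O j := by
        have h1 : Finset.range k \ (Finset.range k \ O i)
            = Finset.range k \ (Finset.range k \ O j) := by
          congr 1
          ext x
          have hx := congrArg (fun f => x ∈ f) hij
          simp only [he, Finset.mem_union, Finset.mem_Ico, Finset.mem_sdiff,
            Finset.mem_range, eq_iff_iff] at hx
          simp only [Finset.mem_sdiff, Finset.mem_range]
          constructor
          · rintro ⟨h1, h2⟩
            have := hx.mp (Or.inr ⟨by simpa using h1, h2⟩)
            rcases this with h | h
            · omega
            · exact ⟨h.1, h.2⟩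
          · rintro ⟨h1, h2⟩
            have := hx.mpr (Or.inr ⟨by simpa using h1, h2⟩)
            rcases this with h | h
            · omega
            · exact ⟨h.1, h.2⟩
        rwa [Finset.sdiff_sdiff_eq_self (hOsub i),
          Finset.sdiff_sdiff_eq_self (hOsub j)] at h1
      have hsteq : st i = st j := by
        have hmi : st i ∈ O i := by simp [hO]; omega
        have hmj : st j ∈ O j := by simp [hO]; omega
        rw [hOeq] at hmi; rw [← hOeq] at hmj
        simp only [hO, Finset.mem_Ico] at hmi hmj
        omega
      rcases Nat.lt_or_ge i j with h | h
      · exact absurd hsteq (Nat.ne_of_lt (hstlt i j h hj))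
      · have : j < i := by omega
        exact absurd hsteq.symm (Nat.ne_of_lt (hstlt j i this hi))
    rw [Finset.card_insert_of_notMem hnotmem, Finset.card_image_of_injOn hinj,
      Finset.card_range, Finset.card_range]
    omega

theorem stmt_11 (k : ℕ) (hk : 1 ≤ k) :
    ∃ (V : Finset ℕ) (E : Finset (Finset ℕ)),
      (∀ e ∈ E, e ⊆ V) ∧ (∀ e ∈ E, e.card = k) ∧
      tau E = 2 ∧
      V.card + E.card =
        k + 1 + Nat.sqrt k + (k + Nat.sqrt k - 1) / Nat.sqrt k := by
  exact stmt_11_aux k (Nat.sqrt k) hk (Nat.sqrt_pos.mpr hk) (Nat.sqrt_le_self k)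
end

section
/- There exists a 7-uniform hypergraph H with n vertices and m edges such that τ(H)/(n+m) = 3/20, i.e., τ(H)/(n+m) = 3/(2·7+6). Consequently c₇ ≥ 0.15. -/
variable {α : Type*} [DecidableEq α]

def V0 : Finset ℕ := Finset.range 13

def E0 : Finset (Finset ℕ) :=
  { {2, 5, 6, 7, 10, 11, 12}, {1, 2, 3, 4, 5, 8, 9}, {0, 3, 4, 6, 7, 9, 10},
    {0, 1, 7, 8, 9, 11, 12}, {0, 1, 2, 5, 6, 8, 10}, {0, 2, 3, 4, 5, 11, 12},
    {1, 3, 4, 6, 8, 11, 12} }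

lemma E0_sub : ∀ e ∈ E0, e ⊆ V0 := by decide

lemma pair_avoid : ∀ u ∈ V0, ∀ v ∈ V0, ∃ e ∈ E0, u ∉ e ∧ v ∉ e := by decide

lemma small_not_trans (T : Finset ℕ) (hT : T.card ≤ 2) : ¬ IsTransversal E0 T := by
  intro h
  have hS : (T ∩ V0).card ≤ 2 := le_trans (Finset.card_le_card (Finset.inter_subset_left)) hT
  -- obtain a pair containing T ∩ V0
  have key : ∃ e ∈ E0, e ∩ T = ∅ := by
    rcases Finset.eq_empty_or_nonempty (T ∩ V0) with hE | ⟨a, ha⟩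
    · refine ⟨{2, 5, 6, 7, 10, 11, 12}, by decide, ?_⟩
      have := E0_sub {2, 5, 6, 7, 10, 11, 12} (by decide)
      rw [Finset.eq_empty_iff_forall_notMem]
      intro x hx
      rw [Finset.mem_inter] at hx
      exact (Finset.eq_empty_iff_forall_notMem.mp hE x)
        (Finset.mem_inter.mpr ⟨hx.2, this hx.1⟩)
    · rcases Finset.eq_empty_or_nonempty ((T ∩ V0).erase a) with hE | ⟨b, hb⟩
      · -- T ∩ V0 = {a}
        obtain ⟨e, he, hua, _⟩ := pair_avoid a (Finset.mem_inter.mp ha).2 a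
          (Finset.mem_inter.mp ha).2
        refine ⟨e, he, ?_⟩
        rw [Finset.eq_empty_iff_forall_notMem]
        intro x hx
        rw [Finset.mem_inter] at hx
        have hxV : x ∈ T ∩ V0 := Finset.mem_inter.mpr ⟨hx.2, E0_sub e he hx.1⟩
        by_cases hxa : x = a
        · exact hua (hxa ▸ hx.1)
        · exact (Finset.eq_empty_iff_forall_notMem.mp hE x)
            (Finset.mem_erase.mpr ⟨hxa, hxV⟩)
      · have hb' := Finset.mem_of_mem_erase hb
        obtain ⟨e, he, hua, hub⟩ := pair_avoid a (Finset.mem_inter.mp ha).2 b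
          (Finset.mem_inter.mp hb').2
        refine ⟨e, he, ?_⟩
        rw [Finset.eq_empty_iff_forall_notMem]
        intro x hx
        rw [Finset.mem_inter] at hx
        have hxV : x ∈ T ∩ V0 := Finset.mem_inter.mpr ⟨hx.2, E0_sub e he hx.1⟩
        by_cases hxa : x = a
        · exact hua (hxa ▸ hx.1)
        by_cases hxb : x = b
        · exact hub (hxb ▸ hx.1)
        -- now T ∩ V0 has ≥ 3 elements: a, b, x
        have h3 : ({a, b, x} : Finset ℕ) ⊆ T ∩ V0 := by
          intro y hy
          simp only [Finset.mem_insert, Finset.mem_singleton] at hy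
          rcases hy with rfl | rfl | rfl
          · exact ha
          · exact hb'
          · exact hxV
        have hab : a ≠ b := fun h => (Finset.mem_erase.mp hb).1 h.symm
        have hcard : ({a, b, x} : Finset ℕ).card = 3 :=
          Finset.card_eq_three.mpr
            ⟨a, b, x, hab, fun h => hxa h.symm, fun h => hxb h.symm, rfl⟩
        have := Finset.card_le_card h3
        omega
  obtain ⟨e, he, hempty⟩ := key
  obtain ⟨x, hx⟩ := h e he
  rw [hempty] at hx
  exact absurd hx (Finset.notMem_empty x)

lemma trans3 : IsTransversal E0 ({0, 1, 2} : Finset ℕ) := by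
  unfold IsTransversal; decide

lemma tau_E0 : tau E0 = 3 := by
  unfold tau
  have hmem : 3 ∈ {n | ∃ T : Finset ℕ, T.card = n ∧ IsTransversal E0 T} :=
    ⟨{0, 1, 2}, by decide, trans3⟩
  refine le_antisymm (Nat.sInf_le hmem) ?_
  by_contra hlt
  push_neg at hlt
  obtain ⟨T, hTc, hTt⟩ :=
    Nat.sInf_mem (⟨3, hmem⟩ : Set.Nonempty {n | ∃ T : Finset ℕ, T.card = n ∧ IsTransversal E0 T})
  exact small_not_trans T (by omega) hTt

theorem stmt_12 :
    ∃ (V : Finset ℕ) (E : Finset (Finset ℕ)),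
      (∀ e ∈ E, e ⊆ V) ∧ (∀ e ∈ E, e.card = 7) ∧
      (tau E : ℚ) / (V.card + E.card) = 3 / 20 := by
  refine ⟨V0, E0, E0_sub, by decide, ?_⟩
  rw [tau_E0]
  have h1 : V0.card = 13 := rfl
  have h2 : E0.card = 7 := by decide
  rw [h1, h2]
  norm_num
end

section
/- For every k ≥ 2, there exists a k-uniform hypergraph H with n vertices and m edges such that τ(H)/(n+m) ≥ 3/(2k+6); hence c_k ≥ 3/(2k+6). -/
variable {α : Type*} [DecidableEq α]

lemma subset_pair_of_card_le_two (T : Finset ℕ) (h : T.card ≤ 2) :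
    ∃ a b : ℕ, T ⊆ {a, b} := by
  rcases T.eq_empty_or_nonempty with rfl | ⟨a, ha⟩
  · exact ⟨0, 0, by simp⟩
  rcases (T.erase a).eq_empty_or_nonempty with he | ⟨b, hb⟩
  · refine ⟨a, a, fun x hx => ?_⟩
    have : x = a := by
      by_contra hxa
      exact absurd (Finset.mem_erase.mpr ⟨hxa, hx⟩) (by simp [he])
    simp [this]
  · obtain ⟨hba, hbT⟩ := Finset.mem_erase.mp hb
    refine ⟨a, b, fun x hx => ?_⟩
    by_contra hxab
    simp only [Finset.mem_insert, Finset.mem_singleton, not_or] at hxab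
    have hsub : ({a, b, x} : Finset ℕ) ⊆ T := by
      intro y hy
      simp only [Finset.mem_insert, Finset.mem_singleton] at hy
      rcases hy with rfl | rfl | rfl <;> assumption
    have hcard : ({a, b, x} : Finset ℕ).card = 3 := by
      rw [Finset.card_insert_of_notMem (by simp [hba.symm, Ne.symm hxab.1]),
          Finset.card_insert_of_notMem (by simp [Ne.symm hxab.2])]
      rfl
    have := Finset.card_le_card hsub
    omega

lemma aux (k : ℕ) (hk : 2 ≤ k) (e : ℕ → Finset ℕ)
    (hsub : ∀ i, i < 6 → e i ⊆ Finset.range (2 * k))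
    (hcard : ∀ i, i < 6 → (e i).card = k)
    (hkey : ∀ a b : ℕ, ¬ (∀ i, i < 6 → a ∈ e i ∨ b ∈ e i)) :
    ∃ (V : Finset ℕ) (E : Finset (Finset ℕ)),
      (∀ e ∈ E, e ⊆ V) ∧ (∀ e ∈ E, e.card = k) ∧
      (3 : ℚ) / (2 * k + 6) ≤ (tau E : ℚ) / (V.card + E.card) := by
  classical
  set V : Finset ℕ := Finset.range (2 * k) with hV
  set E : Finset (Finset ℕ) := (Finset.range 6).image e with hE
  have hmem : ∀ f ∈ E, ∃ i, i < 6 ∧ f = e i := by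
    intro f hf
    rw [hE, Finset.mem_image] at hf
    obtain ⟨i, hi, rfl⟩ := hf
    exact ⟨i, Finset.mem_range.mp hi, rfl⟩
  have hEsub : ∀ f ∈ E, f ⊆ V := by
    intro f hf
    obtain ⟨i, hi, rfl⟩ := hmem f hf
    exact hsub i hi
  have hEcard : ∀ f ∈ E, f.card = k := by
    intro f hf
    obtain ⟨i, hi, rfl⟩ := hmem f hf
    exact hcard i hi
  refine ⟨V, E, hEsub, hEcard, ?_⟩
  -- the set of transversal sizes
  have hne : {n | ∃ T : Finset ℕ, T.card = n ∧ IsTransversal E T}.Nonempty := by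
    refine ⟨V.card, V, rfl, fun f hf => ?_⟩
    have h1 : f ∩ V = f := Finset.inter_eq_left.mpr (hEsub f hf)
    rw [h1]
    have := hEcard f hf
    exact Finset.card_pos.mp (by omega)
  have htau : 3 ≤ tau E := by
    apply le_csInf hne
    rintro n ⟨T, rfl, hT⟩
    by_contra hlt
    push_neg at hlt
    obtain ⟨a, b, hab⟩ := subset_pair_of_card_le_two T (by omega)
    apply hkey a b
    intro i hi
    have hiE : e i ∈ E := by
      rw [hE, Finset.mem_image]
      exact ⟨i, Finset.mem_range.mpr hi, rfl⟩
    obtain ⟨v, hv⟩ := hT (e i) hiE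
    rw [Finset.mem_inter] at hv
    have := hab hv.2
    simp only [Finset.mem_insert, Finset.mem_singleton] at this
    rcases this with rfl | rfl
    · exact Or.inl hv.1
    · exact Or.inr hv.1
  have hVcard : V.card = 2 * k := Finset.card_range _
  have hEcard6 : E.card ≤ 6 := le_trans Finset.card_image_le (by simp)
  have hpos : (0 : ℚ) < (V.card : ℚ) + E.card := by
    have h4 : 4 ≤ V.card := by omega
    have h4' : (4 : ℚ) ≤ (V.card : ℚ) := by exact_mod_cast h4
    have h0 : (0 : ℚ) ≤ (E.card : ℚ) := by positivity
    linarith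
  have hden : (V.card : ℚ) + E.card ≤ 2 * k + 6 := by
    rw [hVcard]
    have : (E.card : ℚ) ≤ 6 := by exact_mod_cast hEcard6
    push_cast
    linarith
  have htau' : (3 : ℚ) ≤ (tau E : ℚ) := by exact_mod_cast htau
  calc (3 : ℚ) / (2 * k + 6) ≤ 3 / ((V.card : ℚ) + E.card) := by
        apply div_le_div_of_nonneg_left (by norm_num) hpos hden
    _ ≤ (tau E : ℚ) / ((V.card : ℚ) + E.card) := by
        gcongr

def evE (s : ℕ) : ℕ → Finset ℕ
  | 0 => Finset.Ico 0 (2*s)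
  | 1 => Finset.Ico 0 s ∪ Finset.Ico (2*s) (3*s)
  | 2 => Finset.Ico 0 s ∪ Finset.Ico (3*s) (4*s)
  | 3 => Finset.Ico s (2*s) ∪ Finset.Ico (3*s) (4*s)
  | 4 => Finset.Ico s (3*s)
  | _ => Finset.Ico (2*s) (4*s)

def odE (s : ℕ) : ℕ → Finset ℕ
  | 0 => Finset.Ico 0 (1+s) ∪ Finset.Ico (2+3*s) (2+4*s)
  | 1 => Finset.Ico 0 (1+s) ∪ Finset.Ico (1+2*s) (1+3*s)
  | 2 => Finset.Ico 0 1 ∪ Finset.Ico (1+s) (1+2*s) ∪ Finset.Ico (1+3*s) (1+4*s)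
  | 3 => Finset.Ico 1 (1+2*s) ∪ Finset.Ico (1+3*s) (2+3*s)
  | 4 => Finset.Ico (1+s) (1+3*s) ∪ Finset.Ico (1+4*s) (2+4*s)
  | _ => Finset.Ico (1+2*s) (2+4*s)

lemma hd_card : ∀ a b c d : ℕ, b ≤ c →
    (Finset.Ico a b ∪ Finset.Ico c d).card = (b - a) + (d - c) := by
  intro a b c d h
  rw [Finset.card_union_of_disjoint, Nat.card_Ico, Nat.card_Ico]
  simp only [Finset.disjoint_left, Finset.mem_Ico]
  intro x hx hx'
  omega

lemma hd3_card : ∀ a b c d f g : ℕ, b ≤ c → c ≤ d → d ≤ f →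
    (Finset.Ico a b ∪ Finset.Ico c d ∪ Finset.Ico f g).card
      = (b - a) + (d - c) + (g - f) := by
  intro a b c d f g h hcd h'
  rw [Finset.card_union_of_disjoint, hd_card _ _ _ _ h, Nat.card_Ico]
  simp only [Finset.disjoint_left, Finset.mem_union, Finset.mem_Ico]
  intro x hx hx'
  omega

theorem stmt_13 (k : ℕ) (hk : 2 ≤ k) :
    ∃ (V : Finset ℕ) (E : Finset (Finset ℕ)),
      (∀ e ∈ E, e ⊆ V) ∧ (∀ e ∈ E, e.card = k) ∧
      (3 : ℚ) / (2 * k + 6) ≤ (tau E : ℚ) / (V.card + E.card) := by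
  rcases Nat.even_or_odd k with ⟨s, hs⟩ | ⟨s, hs⟩
  · have hs1 : 1 ≤ s := by omega
    apply aux k hk (evE s)
    · intro i hi v hv
      interval_cases i <;>
        simp only [evE, Finset.mem_union, Finset.mem_Ico, Finset.mem_range] at hv ⊢ <;>
        omega
    · intro i hi
      interval_cases i <;>
        simp only [evE] <;>
        first
          | (rw [Nat.card_Ico]; omega)
          | (rw [hd_card _ _ _ _ (by omega)]; omega)
    · intro a b h
      have h0 := h 0 (by norm_num)
      have h1 := h 1 (by norm_num)
      have h2 := h 2 (by norm_num)
      have h3 := h 3 (by norm_num)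
      have h4 := h 4 (by norm_num)
      have h5 := h 5 (by norm_num)
      simp only [evE, Finset.mem_union, Finset.mem_Ico] at h0 h1 h2 h3 h4 h5
      omega
  · have hs1 : 1 ≤ s := by omega
    apply aux k hk (odE s)
    · intro i hi v hv
      interval_cases i <;>
        simp only [odE, Finset.mem_union, Finset.mem_Ico, Finset.mem_range] at hv ⊢ <;>
        omega
    · intro i hi
      interval_cases i <;>
        simp only [odE] <;>
        first
          | (rw [Nat.card_Ico]; omega)
          | (rw [hd3_card _ _ _ _ _ _ (by omega) (by omega) (by omega)]; omega)
          | (rw [hd_card _ _ _ _ (by omega)]; omega)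
    · intro a b h
      have h0 := h 0 (by norm_num)
      have h1 := h 1 (by norm_num)
      have h2 := h 2 (by norm_num)
      have h3 := h 3 (by norm_num)
      have h4 := h 4 (by norm_num)
      have h5 := h 5 (by norm_num)
      simp only [odE, Finset.mem_union, Finset.mem_Ico] at h0 h1 h2 h3 h4 h5
      omega
end
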